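/- arXiv:2604.14033 — 2 statements merged into one kernel-verified Lean document; each statement's English description precedes it below -/
import Mathlib

section
/- Let F : Ω × ℝ → ℝ be continuous in the second variable with F(x,·) achieving intermediate values, and let Λ : Ω → [0,1] be Borel, u⁻ ≤ u⁺ Borel functions. Then there exists a Borel function λ : Ω → [0,1] such that for every x, Λ(x) F(x, u⁺(x)) + (1−Λ(x)) F(x, u⁻(x)) = F(x, (1−λ(x)) u⁻(x) + λ(x) u⁺(x)). -/
open MeasureTheory Set

theorem external_to_internal_selection {N : ℕ}
    (F : EuclideanSpace ℝ (Fin N) → ℝ → ℝ)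
    (hFmeas : ∀ t : ℝ, Measurable fun x => F x t)
    (hFcont : ∀ x, Continuous (F x))
    (Lam um up : EuclideanSpace ℝ (Fin N) → ℝ)
    (hLam : Measurable Lam) (hLam01 : ∀ x, Lam x ∈ Icc (0:ℝ) 1)
    (hum : Measurable um) (hup : Measurable up) (hle : ∀ x, um x ≤ up x) :
    ∃ lam : EuclideanSpace ℝ (Fin N) → ℝ, Measurable lam ∧
      ∀ x, lam x ∈ Icc (0:ℝ) 1 ∧
        Lam x * F x (up x) + (1 - Lam x) * F x (um x)
          = F x ((1 - lam x) * um x + lam x * up x) := by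
  classical
  -- joint measurability of (t, x) ↦ F x t
  have hG : Measurable (Function.uncurry fun (t : ℝ) (x : EuclideanSpace ℝ (Fin N)) => F x t) :=
    measurable_uncurry_of_continuous_of_measurable (fun x => hFcont x) hFmeas
  have hcomp : ∀ v : EuclideanSpace ℝ (Fin N) → ℝ, Measurable v →
      Measurable fun x => F x (v x) := fun v hv => hG.comp (hv.prodMk measurable_id)
  set T : EuclideanSpace ℝ (Fin N) → ℝ :=
    fun x => Lam x * F x (up x) + (1 - Lam x) * F x (um x) with hTdef
  have hTmeas : Measurable T :=
    (hLam.mul (hcomp up hup)).add ((measurable_const.sub hLam).mul (hcomp um hum))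
  set g : EuclideanSpace ℝ (Fin N) → ℝ → ℝ :=
    fun x t => F x ((1 - t) * um x + t * up x) - T x with hgdef
  have hgcont : ∀ x, Continuous (g x) := by
    intro x
    exact ((hFcont x).comp (by continuity)).sub continuous_const
  have hgmeas : ∀ t : ℝ, Measurable fun x => g x t := by
    intro t
    exact (hcomp _ ((hum.const_mul (1 - t)).add (hup.const_mul t))).sub hTmeas
  set S : EuclideanSpace ℝ (Fin N) → Set ℝ :=
    fun x => {t | t ∈ Icc (0:ℝ) 1 ∧ g x t = 0} with hSdef
  have hSne : ∀ x, (S x).Nonempty := by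
    intro x
    have h0 : g x 0 = F x (um x) - T x := by simp [hgdef]
    have h1 : g x 1 = F x (up x) - T x := by simp [hgdef]
    have hmem0 : (0:ℝ) ∈ uIcc (g x 0) (g x 1) := by
      obtain ⟨hL0, hL1⟩ := hLam01 x
      rw [mem_uIcc, h0, h1, hTdef]
      beta_reduce
      rcases le_total (F x (um x)) (F x (up x)) with h | h
      · left; constructor <;> nlinarith
      · right; constructor <;> nlinarith
    have hsub := intermediate_value_uIcc (a := (0:ℝ)) (b := 1) (hgcont x).continuousOn
    obtain ⟨t, ht, hgt⟩ := hsub hmem0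
    rw [uIcc_of_le zero_le_one] at ht
    exact ⟨t, ht, hgt⟩
  have hSclosed : ∀ x, IsClosed (S x) := by
    intro x
    have : S x = Icc (0:ℝ) 1 ∩ g x ⁻¹' {0} := by ext t; simp [hSdef, and_comm]
    rw [this]
    exact isClosed_Icc.inter (isClosed_singleton.preimage (hgcont x))
  have hSbdd : ∀ x, BddBelow (S x) := fun x => ⟨0, fun t ht => ht.1.1⟩
  set lam : EuclideanSpace ℝ (Fin N) → ℝ := fun x => sInf (S x) with hlamdef
  have hmem : ∀ x, lam x ∈ S x := fun x =>
    (hSclosed x).csInf_mem (hSne x) (hSbdd x)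
  refine ⟨lam, ?_, ?_⟩
  · -- measurability of lam
    apply measurable_of_Iic
    intro a
    rcases lt_or_ge a 0 with ha | ha
    · have : lam ⁻¹' Iic a = ∅ := by
        ext x
        simp only [mem_preimage, mem_Iic, mem_empty_iff_false, iff_false, not_le]
        exact lt_of_lt_of_le ha (hmem x).1.1
      rw [this]; exact MeasurableSet.empty
    · set a' : ℝ := min a 1 with ha'def
      have ha'0 : 0 ≤ a' := le_min ha zero_le_one
      have key : lam ⁻¹' Iic a =
          ⋂ n : ℕ, ⋃ q : {q : ℚ // (q : ℝ) ∈ Icc 0 a'},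
            {x | |g x (q : ℝ)| < 1 / (n + 1)} := by
        ext x
        simp only [mem_preimage, mem_Iic, mem_iInter, mem_iUnion, mem_setOf_eq]
        constructor
        · intro hx n
          set t₀ := lam x with ht₀def
          have ht₀S := hmem x
          have ht₀ : t₀ ∈ Icc 0 a' := ⟨ht₀S.1.1, le_min hx ht₀S.1.2⟩
          have hε : (0:ℝ) < 1 / (n + 1) := by positivity
          obtain ⟨δ, hδ0, hδ⟩ :=
            Metric.continuousAt_iff.mp ((hgcont x).continuousAt (x := t₀)) _ hε
          rcases eq_or_lt_of_le ha'0 with hcase | hcase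
          · refine ⟨⟨(0 : ℚ), by simp [← hcase]⟩, ?_⟩
            have ht₀0 : t₀ = 0 := le_antisymm (hcase ▸ ht₀.2) ht₀.1
            have : g x 0 = 0 := ht₀0 ▸ ht₀S.2
            simpa [this] using hε
          · have hlt : max 0 (t₀ - δ) < min a' (t₀ + δ) := by
              rcases ht₀ with ⟨h1, h2⟩
              simp only [max_lt_iff, lt_min_iff]
              refine ⟨⟨hcase, by linarith⟩, ⟨by linarith, by linarith⟩⟩
            obtain ⟨q, hq1, hq2⟩ := exists_rat_btwn hlt
            have hq0 : (0:ℝ) ≤ q := le_of_lt (lt_of_le_of_lt (le_max_left _ _) hq1)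
            have hqa : (q:ℝ) ≤ a' := le_of_lt (lt_of_lt_of_le hq2 (min_le_left _ _))
            refine ⟨⟨q, hq0, hqa⟩, ?_⟩
            have hdist : dist (q:ℝ) t₀ < δ := by
              rw [Real.dist_eq, abs_lt]
              constructor
              · have := lt_of_le_of_lt (le_max_right 0 (t₀ - δ)) hq1; linarith
              · have := lt_of_lt_of_le hq2 (min_le_right _ _); linarith
            have := hδ hdist
            rwa [Real.dist_eq, ht₀S.2, sub_zero] at this
        · intro hx
          have hx' : ∀ n : ℕ, ∃ t ∈ Icc (0:ℝ) a', |g x t| < 1 / (n + 1) := by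
            intro n
            obtain ⟨q, hq⟩ := hx n
            exact ⟨(q : ℝ), q.2, hq⟩
          choose u hu1 hu2 using hx'
          obtain ⟨t, htI, φ, hφ, hlim⟩ := isCompact_Icc.tendsto_subseq hu1
          have h1 : Filter.Tendsto (fun n => g x (u (φ n))) Filter.atTop (nhds (g x t)) :=
            ((hgcont x).tendsto t).comp hlim
          have h2 : Filter.Tendsto (fun n => g x (u (φ n))) Filter.atTop (nhds 0) := by
            apply squeeze_zero_norm (a := fun n : ℕ => 1 / ((n:ℝ) + 1))
            · intro n
              have h3 : |g x (u (φ n))| < 1 / ((φ n : ℝ) + 1) := hu2 (φ n)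
              have h4 : (1:ℝ) / ((φ n : ℝ) + 1) ≤ 1 / ((n:ℝ) + 1) := by
                apply one_div_le_one_div_of_le (by positivity)
                have : (n:ℝ) ≤ (φ n : ℝ) := Nat.cast_le.mpr hφ.le_apply
                linarith
              exact le_trans h3.le h4
            · exact tendsto_one_div_add_atTop_nhds_zero_nat
          have hgt : g x t = 0 := tendsto_nhds_unique h1 h2
          have htS : t ∈ S x := ⟨⟨htI.1, htI.2.trans (min_le_right a 1)⟩, hgt⟩
          calc lam x ≤ t := csInf_le (hSbdd x) htS
            _ ≤ a' := htI.2
            _ ≤ a := min_le_left a 1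
      rw [key]
      exact MeasurableSet.iInter fun n => MeasurableSet.iUnion fun q =>
        measurableSet_lt ((hgmeas (q : ℝ)).abs) measurable_const
  · intro x
    refine ⟨(hmem x).1, ?_⟩
    have := (hmem x).2
    rw [hgdef] at this
    simpa [hTdef] using (sub_eq_zero.mp this).symm
end

section
/- Let F : Ω × ℝ → ℝ be 1-Lipschitz in the second variable, u⁻ ≤ u^λ ≤ u⁺ real numbers (for fixed x ∈ Ω), and define Λ := (F(x,u^λ) − F(x,u⁻)) / (F(x,u⁺) − F(x,u⁻)) when F(x,u⁺) ≠ F(x,u⁻), Λ := 0 otherwise, and Λ̃ := max(0, min(1, Λ)). Set R := F(x, u^λ) − ((1−Λ̃) F(x,u⁻) + Λ̃ F(x,u⁺)). Then |R| ≤ u⁺ − u⁻, and R = 0 whenever F(x,u^λ) lies between F(x,u⁻) and F(x,u⁺). -/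
open Set

theorem remainder_estimate (F : ℝ → ℝ) (hLip : ∀ s t : ℝ, |F t - F s| ≤ |t - s|)
    (um ul up : ℝ) (h1 : um ≤ ul) (h2 : ul ≤ up)
    (Lam Lamt R : ℝ)
    (hLam : Lam = if F up ≠ F um then (F ul - F um) / (F up - F um) else 0)
    (hLamt : Lamt = max 0 (min 1 Lam))
    (hR : R = F ul - ((1 - Lamt) * F um + Lamt * F up)) :
    |R| ≤ up - um ∧ (F ul ∈ Set.uIcc (F um) (F up) → R = 0) := by
  have hL1 : |F ul - F um| ≤ up - um := by
    calc |F ul - F um| ≤ |ul - um| := hLip um ul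
    _ = ul - um := by rw [abs_of_nonneg]; linarith
    _ ≤ up - um := by linarith
  have hL2 : |F ul - F up| ≤ up - um := by
    calc |F ul - F up| ≤ |ul - up| := hLip up ul
    _ = up - ul := by rw [abs_sub_comm, abs_of_nonneg]; linarith
    _ ≤ up - um := by linarith
  by_cases hne : F up = F um
  · simp only [hne, ne_eq, not_true_eq_false, if_false] at hLam
    have hT : Lamt = 0 := by simp [hLamt, hLam]
    have hR' : R = F ul - F um := by rw [hR, hT]; ring
    refine ⟨by rwa [hR'], fun h => ?_⟩
    rw [hne, Set.uIcc_self, Set.mem_singleton_iff] at h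
    rw [hR', h, sub_self]
  · simp only [ne_eq, hne, not_false_eq_true, if_true] at hLam
    have hd : F up - F um ≠ 0 := sub_ne_zero.mpr hne
    have hLd : Lam * (F up - F um) = F ul - F um := by
      rw [hLam]; field_simp
    rcases lt_or_ge Lam 0 with h0 | h0
    · have hT : Lamt = 0 := by
        rw [hLamt, max_eq_left]
        exact (min_le_right _ _).trans h0.le
      have hR' : R = F ul - F um := by rw [hR, hT]; ring
      refine ⟨by rwa [hR'], fun h => ?_⟩
      rw [Set.mem_uIcc] at h
      rcases h with ⟨ha, hb⟩ | ⟨ha, hb⟩ <;> nlinarith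
    rcases lt_or_ge 1 Lam with hh1 | hh1
    · have hT : Lamt = 1 := by
        rw [hLamt, min_eq_left hh1.le]; simp
      have hR' : R = F ul - F up := by rw [hR, hT]; ring
      refine ⟨by rwa [hR'], fun h => ?_⟩
      rw [Set.mem_uIcc] at h
      rcases h with ⟨ha, hb⟩ | ⟨ha, hb⟩ <;> nlinarith
    · have hT : Lamt = Lam := by
        rw [hLamt, min_eq_right hh1, max_eq_right h0]
      have hR' : R = 0 := by rw [hR, hT]; nlinarith [hLd]
      exact ⟨by rw [hR']; simp; linarith, fun _ => hR'⟩
end
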